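/- For the path Pₙ with n odd, α = 1/2, and total mass 1, the distribution placing mass 2/(n+1) on each odd-indexed vertex and 0 on each even-indexed vertex is an equilibrium of the α-uniform NBG, in which every vertex has cost exactly 2/(n+1). -/

import Mathlib

/-- On the path Pₙ with n odd and α = 1/2, the distribution putting mass
2/(n+1) on each odd-indexed vertex (vertices numbered 1,…,n, with convention
x₀ = x_{n+1} = 0) and 0 elsewhere has total mass 1, gives every vertex cost exactly
2/(n+1), and is an equilibrium of the (1/2)-uniform NBG. -/
theorem stmt_17 (n : ℕ) (hn : 1 ≤ n) (hodd : Odd n) :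
    (∑ k ∈ Finset.Icc 1 n,
        (if 1 ≤ k ∧ k ≤ n ∧ k % 2 = 1 then (2 : ℝ) / (n + 1) else 0) = 1) ∧
    (∀ k ∈ Finset.Icc 1 n,
      (if 1 ≤ k ∧ k ≤ n ∧ k % 2 = 1 then (2 : ℝ) / (n + 1) else 0)
        + (1 / 2) * ((if 1 ≤ k - 1 ∧ k - 1 ≤ n ∧ (k - 1) % 2 = 1 then (2 : ℝ) / (n + 1) else 0)
          + (if 1 ≤ k + 1 ∧ k + 1 ≤ n ∧ (k + 1) % 2 = 1 then (2 : ℝ) / (n + 1) else 0))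
        = 2 / (n + 1)) ∧
    (∀ k ∈ Finset.Icc 1 n, ∀ l ∈ Finset.Icc 1 n,
      (0 < (if 1 ≤ k ∧ k ≤ n ∧ k % 2 = 1 then (2 : ℝ) / (n + 1) else 0)) →
      (if 1 ≤ k ∧ k ≤ n ∧ k % 2 = 1 then (2 : ℝ) / (n + 1) else 0)
        + (1 / 2) * ((if 1 ≤ k - 1 ∧ k - 1 ≤ n ∧ (k - 1) % 2 = 1 then (2 : ℝ) / (n + 1) else 0)
          + (if 1 ≤ k + 1 ∧ k + 1 ≤ n ∧ (k + 1) % 2 = 1 then (2 : ℝ) / (n + 1) else 0))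
      ≤ (if 1 ≤ l ∧ l ≤ n ∧ l % 2 = 1 then (2 : ℝ) / (n + 1) else 0)
        + (1 / 2) * ((if 1 ≤ l - 1 ∧ l - 1 ≤ n ∧ (l - 1) % 2 = 1 then (2 : ℝ) / (n + 1) else 0)
          + (if 1 ≤ l + 1 ∧ l + 1 ≤ n ∧ (l + 1) % 2 = 1 then (2 : ℝ) / (n + 1) else 0))) := by
  obtain ⟨m, hm⟩ := hodd
  have hcost : ∀ k ∈ Finset.Icc 1 n,
      (if 1 ≤ k ∧ k ≤ n ∧ k % 2 = 1 then (2 : ℝ) / (n + 1) else 0)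
        + (1 / 2) * ((if 1 ≤ k - 1 ∧ k - 1 ≤ n ∧ (k - 1) % 2 = 1 then (2 : ℝ) / (n + 1) else 0)
          + (if 1 ≤ k + 1 ∧ k + 1 ≤ n ∧ (k + 1) % 2 = 1 then (2 : ℝ) / (n + 1) else 0))
        = 2 / (n + 1) := by
    intro k hk
    rw [Finset.mem_Icc] at hk
    rcases Nat.even_or_odd k with he | ho
    · obtain ⟨j, hj⟩ := he
      have h1 : ¬(1 ≤ k ∧ k ≤ n ∧ k % 2 = 1) := by omega
      have h2 : 1 ≤ k - 1 ∧ k - 1 ≤ n ∧ (k - 1) % 2 = 1 := by omega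
      have h3 : 1 ≤ k + 1 ∧ k + 1 ≤ n ∧ (k + 1) % 2 = 1 := by omega
      rw [if_neg h1, if_pos h2, if_pos h3]; ring
    · obtain ⟨j, hj⟩ := ho
      have h1 : 1 ≤ k ∧ k ≤ n ∧ k % 2 = 1 := by omega
      have h2 : ¬(1 ≤ k - 1 ∧ k - 1 ≤ n ∧ (k - 1) % 2 = 1) := by omega
      have h3 : ¬(1 ≤ k + 1 ∧ k + 1 ≤ n ∧ (k + 1) % 2 = 1) := by omega
      rw [if_pos h1, if_neg h2, if_neg h3]; ring
  refine ⟨?_, hcost, ?_⟩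
  · have hsum : ∑ k ∈ Finset.Icc 1 n,
        (if 1 ≤ k ∧ k ≤ n ∧ k % 2 = 1 then (2 : ℝ) / (n + 1) else 0)
        = ∑ k ∈ Finset.Icc 1 n, (if k % 2 = 1 then (2 : ℝ) / (n + 1) else 0) := by
      apply Finset.sum_congr rfl
      intro k hk
      rw [Finset.mem_Icc] at hk
      by_cases h : k % 2 = 1
      · rw [if_pos ⟨hk.1, hk.2, h⟩, if_pos h]
      · rw [if_neg (by tauto), if_neg h]
    rw [hsum, ← Finset.sum_filter, Finset.sum_const]
    have hcard : ((Finset.Icc 1 n).filter (fun k => k % 2 = 1)).card = m + 1 := by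
      have key := Finset.card_filter_add_card_filter_not
        (s := Finset.Icc 1 n) (p := fun k => k % 2 = 1)
      have hdvd : (Finset.Icc 1 n).filter (fun k => ¬ k % 2 = 1)
          = (Finset.Ioc 0 n).filter (fun k => 2 ∣ k) := by
        rw [← Finset.Icc_add_one_left_eq_Ioc]
        apply Finset.filter_congr
        intro x _
        simp only [Nat.dvd_iff_mod_eq_zero, eq_iff_iff]
        omega
      have := Nat.Ioc_filter_dvd_card_eq_div n 2
      rw [hdvd, this] at key
      rw [Nat.card_Icc] at key
      omega
    rw [hcard]
    have : ((n : ℝ) + 1) = 2 * m + 2 := by push_cast [hm]; ring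
    rw [this]
    field_simp
    rw [nsmul_eq_mul]; push_cast; field_simp
  · intro k hk l hl _
    rw [hcost k hk, hcost l hl]
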